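/- Let N ≥ 1 and ζ_1,…,ζ_N, r_1,…,r_N ∈ ℂ with Re ζ_1 < Re ζ_2 < … < Re ζ_N and r_j ≠ 0 for all j. Fix k with 1 ≤ k ≤ N and write k̄ = N+1−k. Let B⁺ = lim_{t→+∞} exp(2ζ_k t)·A_k(t)/A_{k−1}(t) and B⁻ = lim_{t→−∞} exp(2ζ_k t)·A_{k̄}(t)/A_{k̄−1}(t), where A_0(t) = 1 and A_k(t) = Σ_{1≤l_1<…<l_k≤N} (r_{l_1}⋯r_{l_k})² W(l_1,…,l_k)² exp(−2(ζ_{l_1}+…+ζ_{l_k})t) with W(l_1,…,l_k) = Π_{p<s, p,s∈{l_1,…,l_k}}(2ζ_s − 2ζ_p). Then both limits exist, are nonzero, and B⁻/B⁺ = Π_{j=k+1}^{N}(2ζ_j − 2ζ_k)² / Π_{j=1}^{k−1}(2ζ_j − 2ζ_k)². (This is the exponentiated form of the interaction shift formula β_{k̄}^− − β_k^+ = Σ_{j≠k} ε_{jk} ln(2ζ_j − 2ζ_k)², with ε_{jk} = 1 for j > k and ε_{jk} = −1 for j < k.) -/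

import Mathlib

/-- The tau-functions of the complex Toda chain: `tauA N ζ r k t` is the sum over
all `k`-element subsets `{l_1 < … < l_k}` of `{1,…,N}` of
`(r_{l_1}⋯r_{l_k})² W(l_1,…,l_k)² exp(-2(ζ_{l_1}+…+ζ_{l_k}) t)`, where
`W(l_1,…,l_k) = ∏_{p<s} (2ζ_s - 2ζ_p)` is the Vandermonde determinant.
In particular `tauA N ζ r 0 t = 1`. -/
noncomputable def tauA (N : ℕ) (ζ r : Fin N → ℂ) (k : ℕ) (t : ℝ) : ℂ :=
  ∑ s ∈ Finset.powersetCard k (Finset.univ : Finset (Fin N)),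
    (∏ j ∈ s, r j) ^ 2 *
    (∏ p ∈ s, ∏ q ∈ s, if p < q then 2 * ζ q - 2 * ζ p else 1) ^ 2 *
    Complex.exp (-2 * (∑ j ∈ s, ζ j) * t)

open Filter Finset Complex

/-- exponential term with negative real-part exponent tends to zero at +∞. -/
lemma exp_mul_tendsto_zero (z : ℂ) (hz : z.re < 0) :
    Tendsto (fun t : ℝ => Complex.exp (z * t)) atTop (nhds 0) := by
  rw [tendsto_zero_iff_norm_tendsto_zero]
  have h1 : Tendsto (fun t : ℝ => z.re * t) atTop atBot :=
    tendsto_id.const_mul_atTop_of_neg hz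
  have := (Real.tendsto_exp_atBot).comp h1
  refine this.congr (fun t => ?_)
  simp [Complex.norm_exp]

/-- the key limit lemma at +∞. -/
lemma lim_atTop {ι : Type*} [DecidableEq ι] (S : Finset ι) (c lam : ι → ℂ) (s0 : ι) (hs0 : s0 ∈ S)
    (hdom : ∀ s ∈ S, s ≠ s0 → (lam s).re < (lam s0).re) :
    Tendsto (fun t : ℝ => Complex.exp (-(lam s0) * t) * ∑ s ∈ S, c s * Complex.exp (lam s * t))
      atTop (nhds (c s0)) := by
  have key : ∀ t : ℝ, Complex.exp (-(lam s0) * t) * ∑ s ∈ S, c s * Complex.exp (lam s * t)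
      = ∑ s ∈ S, c s * Complex.exp ((lam s - lam s0) * t) := by
    intro t
    rw [Finset.mul_sum]
    refine Finset.sum_congr rfl fun s _ => ?_
    rw [show (lam s - lam s0) * (t:ℂ) = -(lam s0) * t + lam s * t by ring, Complex.exp_add]
    ring
  simp only [key]
  have : (c s0) = ∑ s ∈ S, (if s = s0 then c s0 else 0) := by
    rw [Finset.sum_ite_eq' S s0 (fun _ => c s0)]
    simp [hs0]
  rw [this]
  refine tendsto_finset_sum _ fun s hs => ?_
  by_cases h : s = s0
  · subst h
    simp only [if_pos rfl, sub_self, zero_mul, Complex.exp_zero, mul_one]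
    exact tendsto_const_nhds
  · simp only [if_neg h]
    have := (exp_mul_tendsto_zero (lam s - lam s0) (by have := hdom s hs h; simp [Complex.sub_re]; linarith)).const_mul (c s)
    simpa using this

/-- the key limit lemma at -∞. -/
lemma lim_atBot {ι : Type*} [DecidableEq ι] (S : Finset ι) (c lam : ι → ℂ) (s0 : ι) (hs0 : s0 ∈ S)
    (hdom : ∀ s ∈ S, s ≠ s0 → (lam s0).re < (lam s).re) :
    Tendsto (fun t : ℝ => Complex.exp (-(lam s0) * t) * ∑ s ∈ S, c s * Complex.exp (lam s * t))
      atBot (nhds (c s0)) := by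
  have h := lim_atTop S c (fun s => -(lam s)) s0 hs0
    (fun s hs hne => by simpa using hdom s hs hne)
  have := h.comp tendsto_neg_atBot_atTop
  refine this.congr (fun t => ?_)
  simp only [Function.comp_def]
  congr 1
  · congr 1; push_cast; ring
  · refine Finset.sum_congr rfl fun s _ => ?_
    congr 2
    push_cast; ring

lemma strictMono_fin_le {k : ℕ} {f : Fin k → ℕ} (hf : StrictMono f) :
    ∀ i : Fin k, (i : ℕ) ≤ f i := by
  intro i
  have hik := i.isLt
  induction' hn : (i : ℕ) with n ih generalizing i
  · exact Nat.zero_le _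
  · have hlt : n < k := by omega
    have h1 : f ⟨n, hlt⟩ < f i := hf (by simp [Fin.lt_def, hn])
    have h2 := ih ⟨n, hlt⟩ hlt rfl
    omega

/-- the bottom `m`-subset of `Fin N`. -/
def botS (N m : ℕ) (h : m ≤ N) : Finset (Fin N) :=
  Finset.univ.map (Fin.castLEEmb h)

lemma mem_botS {N m : ℕ} (h : m ≤ N) (j : Fin N) : j ∈ botS N m h ↔ (j : ℕ) < m := by
  simp only [botS, Finset.mem_map, Finset.mem_univ, true_and]
  constructor
  · rintro ⟨i, rfl⟩; exact i.isLt
  · intro hj; exact ⟨⟨j, hj⟩, rfl⟩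

lemma card_botS {N m : ℕ} (h : m ≤ N) : (botS N m h).card = m := by simp [botS]

/-- the top `m`-subset of `Fin N`. -/
def topS (N m : ℕ) (h : m ≤ N) : Finset (Fin N) := (botS N m h).image Fin.rev

lemma mem_topS {N m : ℕ} (h : m ≤ N) (j : Fin N) : j ∈ topS N m h ↔ N - m ≤ (j : ℕ) := by
  simp only [topS, Finset.mem_image]
  constructor
  · rintro ⟨a, ha, rfl⟩
    rw [mem_botS] at ha
    have := a.isLt
    simp [Fin.val_rev]; omega
  · intro hj
    refine ⟨j.rev, ?_, j.rev_rev⟩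
    rw [mem_botS]
    have := j.isLt
    simp [Fin.val_rev]; omega

lemma card_topS {N m : ℕ} (h : m ≤ N) : (topS N m h).card = m := by
  rw [topS, Finset.card_image_of_injective _ Fin.rev_injective, card_botS]

lemma sum_bot_lt {N m : ℕ} (h : m ≤ N) (w : Fin N → ℝ)
    (hmono : ∀ i j : Fin N, (i : ℕ) < (j : ℕ) → w i < w j)
    (s : Finset (Fin N)) (hcard : s.card = m) (hne : s ≠ botS N m h) :
    ∑ j ∈ botS N m h, w j < ∑ j ∈ s, w j := by
  set e := s.orderEmbOfFin hcard with he
  have hmonoe : StrictMono (fun i : Fin m => ((e i : Fin N) : ℕ)) :=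
    fun i j hij => by exact_mod_cast (e.strictMono hij)
  have hle : ∀ i : Fin m, (i : ℕ) ≤ (e i : ℕ) := strictMono_fin_le hmonoe
  have hsmap : s = Finset.univ.map e.toEmbedding := by
    apply Finset.coe_injective
    rw [Finset.coe_map]
    simp only [Finset.coe_univ, Set.image_univ]
    exact (Finset.range_orderEmbOfFin s hcard).symm
  rw [hsmap, botS, Finset.sum_map, Finset.sum_map]
  have hex : ∃ i : Fin m, (i : ℕ) < (e i : ℕ) := by
    by_contra hcon
    push_neg at hcon
    apply hne
    have : ∀ i : Fin m, e i = Fin.castLE h i := by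
      intro i
      apply Fin.ext
      exact le_antisymm (hcon i) (hle i)
    rw [hsmap, botS]
    refine Finset.ext fun a => ?_
    simp only [Finset.mem_map, Finset.mem_univ, true_and]
    constructor
    · rintro ⟨i, rfl⟩; exact ⟨i, (this i).symm⟩
    · rintro ⟨i, rfl⟩; exact ⟨i, this i⟩
  obtain ⟨i0, hi0⟩ := hex
  apply Finset.sum_lt_sum
  · intro i _
    rcases lt_or_eq_of_le (hle i) with hlt | heq
    · exact le_of_lt (hmono _ _ (by simpa using hlt))
    · have : Fin.castLE h i = e i := Fin.ext (by simpa using heq)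
      simp [this]
  · exact ⟨i0, Finset.mem_univ i0, hmono _ _ (by simpa using hi0)⟩

lemma sum_lt_top {N m : ℕ} (h : m ≤ N) (w : Fin N → ℝ)
    (hmono : ∀ i j : Fin N, (i : ℕ) < (j : ℕ) → w i < w j)
    (s : Finset (Fin N)) (hcard : s.card = m) (hne : s ≠ topS N m h) :
    ∑ j ∈ s, w j < ∑ j ∈ topS N m h, w j := by
  have hrevmono : ∀ i j : Fin N, (i : ℕ) < (j : ℕ) → -(w (Fin.rev i)) < -(w (Fin.rev j)) := by
    intro i j hij
    have hi := i.isLt; have hj := j.isLt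
    have : (Fin.rev j : ℕ) < (Fin.rev i : ℕ) := by simp [Fin.val_rev]; omega
    have := hmono _ _ this
    linarith
  have hcard' : (s.image Fin.rev).card = m := by
    rw [Finset.card_image_of_injective _ Fin.rev_injective, hcard]
  have hne' : s.image Fin.rev ≠ botS N m h := by
    intro hcon
    apply hne
    have : (s.image Fin.rev).image Fin.rev = s := by
      rw [Finset.image_image]
      simp [Function.comp_def, Fin.rev_rev]
    rw [← this, hcon]; rfl
  have key := sum_bot_lt h (fun j => -(w (Fin.rev j))) hrevmono (s.image Fin.rev) hcard' hne'
  have h1 : ∑ j ∈ s.image Fin.rev, -(w (Fin.rev j)) = -∑ j ∈ s, w j := by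
    rw [Finset.sum_image (fun a _ b _ hab => Fin.rev_injective hab)]
    simp [Fin.rev_rev]
  have h2 : ∑ j ∈ botS N m h, -(w (Fin.rev j)) = -∑ j ∈ topS N m h, w j := by
    rw [topS, Finset.sum_image (fun a _ b _ hab => Fin.rev_injective hab)]
    simp [Fin.rev_rev]
  rw [h1, h2] at key
  linarith

/-- The coefficient of the exponential in the tau-function. -/
noncomputable def coefA (N : ℕ) (ζ r : Fin N → ℂ) (s : Finset (Fin N)) : ℂ :=
  (∏ j ∈ s, r j) ^ 2 *
    (∏ p ∈ s, ∏ q ∈ s, if p < q then 2 * ζ q - 2 * ζ p else 1) ^ 2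

lemma coefA_ne_zero {N : ℕ} (ζ r : Fin N → ℂ)
    (hsort : ∀ i j : Fin N, (i : ℕ) < (j : ℕ) → (ζ i).re < (ζ j).re)
    (hr : ∀ j : Fin N, r j ≠ 0) (s : Finset (Fin N)) : coefA N ζ r s ≠ 0 := by
  apply mul_ne_zero
  · exact pow_ne_zero _ (Finset.prod_ne_zero_iff.mpr fun j _ => hr j)
  · apply pow_ne_zero
    apply Finset.prod_ne_zero_iff.mpr
    intro p _
    apply Finset.prod_ne_zero_iff.mpr
    intro q _
    split_ifs with h
    · have : (p : ℕ) < (q : ℕ) := h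
      have h2 := hsort p q this
      intro hc
      have : (2 * ζ q - 2 * ζ p).re = 2 * (ζ q).re - 2 * (ζ p).re := by
        simp [Complex.sub_re, Complex.mul_re]
      rw [hc] at this
      simp at this
      linarith
    · exact one_ne_zero

lemma coefA_insert {N : ℕ} (ζ r : Fin N → ℂ) (a : Fin N) (s : Finset (Fin N)) (ha : a ∉ s) :
    coefA N ζ r (insert a s) = coefA N ζ r s *
      ((r a) ^ 2 * ((∏ q ∈ s, if a < q then 2 * ζ q - 2 * ζ a else 1) *
        (∏ p ∈ s, if p < a then 2 * ζ a - 2 * ζ p else 1)) ^ 2) := by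
  unfold coefA
  rw [Finset.prod_insert ha, Finset.prod_insert ha, Finset.prod_insert ha,
    if_neg (lt_irrefl a),
    show (∏ p ∈ s, ∏ q ∈ insert a s, if p < q then 2 * ζ q - 2 * ζ p else 1)
      = ∏ p ∈ s, ((if p < a then 2 * ζ a - 2 * ζ p else 1) *
          ∏ q ∈ s, if p < q then 2 * ζ q - 2 * ζ p else 1) from
      Finset.prod_congr rfl fun p _ => Finset.prod_insert ha,
    Finset.prod_mul_distrib]
  ring

lemma tauA_eq (N : ℕ) (ζ r : Fin N → ℂ) (m : ℕ) (t : ℝ) :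
    tauA N ζ r m t = ∑ s ∈ Finset.powersetCard m (Finset.univ : Finset (Fin N)),
      coefA N ζ r s * Complex.exp ((-2 * ∑ j ∈ s, ζ j) * t) := rfl

/-- limit of the normalized tau-function at +∞. -/
lemma tauA_lim_atTop {N : ℕ} (ζ r : Fin N → ℂ)
    (hsort : ∀ i j : Fin N, (i : ℕ) < (j : ℕ) → (ζ i).re < (ζ j).re)
    (m : ℕ) (h : m ≤ N) :
    Tendsto (fun t : ℝ => Complex.exp ((2 * ∑ j ∈ botS N m h, ζ j) * t) * tauA N ζ r m t)
      atTop (nhds (coefA N ζ r (botS N m h))) := by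
  have hmem : botS N m h ∈ Finset.powersetCard m (Finset.univ : Finset (Fin N)) :=
    Finset.mem_powersetCard.mpr ⟨Finset.subset_univ _, card_botS h⟩
  have hdom : ∀ s ∈ Finset.powersetCard m (Finset.univ : Finset (Fin N)), s ≠ botS N m h →
      ((-2 : ℂ) * ∑ j ∈ s, ζ j).re < ((-2 : ℂ) * ∑ j ∈ botS N m h, ζ j).re := by
    intro s hs hne
    have hcard : s.card = m := (Finset.mem_powersetCard.mp hs).2
    have := sum_bot_lt h (fun j => (ζ j).re) (fun i j hij => hsort i j hij) s hcard hne
    have hre : ∀ z : ℂ, ((-2 : ℂ) * z).re = -2 * z.re := by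
      intro z; simp [Complex.mul_re]
    rw [← Complex.re_sum, ← Complex.re_sum] at this
    rw [hre, hre]
    linarith
  have := lim_atTop _ (coefA N ζ r) (fun s => (-2 : ℂ) * ∑ j ∈ s, ζ j) _ hmem hdom
  refine this.congr fun t => ?_
  rw [tauA_eq]
  congr 2
  ring

/-- limit of the normalized tau-function at -∞. -/
lemma tauA_lim_atBot {N : ℕ} (ζ r : Fin N → ℂ)
    (hsort : ∀ i j : Fin N, (i : ℕ) < (j : ℕ) → (ζ i).re < (ζ j).re)
    (m : ℕ) (h : m ≤ N) :
    Tendsto (fun t : ℝ => Complex.exp ((2 * ∑ j ∈ topS N m h, ζ j) * t) * tauA N ζ r m t)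
      atBot (nhds (coefA N ζ r (topS N m h))) := by
  have hmem : topS N m h ∈ Finset.powersetCard m (Finset.univ : Finset (Fin N)) :=
    Finset.mem_powersetCard.mpr ⟨Finset.subset_univ _, card_topS h⟩
  have hdom : ∀ s ∈ Finset.powersetCard m (Finset.univ : Finset (Fin N)), s ≠ topS N m h →
      ((-2 : ℂ) * ∑ j ∈ topS N m h, ζ j).re < ((-2 : ℂ) * ∑ j ∈ s, ζ j).re := by
    intro s hs hne
    have hcard : s.card = m := (Finset.mem_powersetCard.mp hs).2
    have := sum_lt_top h (fun j => (ζ j).re) (fun i j hij => hsort i j hij) s hcard hne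
    have hre : ∀ z : ℂ, ((-2 : ℂ) * z).re = -2 * z.re := by
      intro z; simp [Complex.mul_re]
    rw [← Complex.re_sum, ← Complex.re_sum] at this
    rw [hre, hre]
    linarith
  have := lim_atBot _ (coefA N ζ r) (fun s => (-2 : ℂ) * ∑ j ∈ s, ζ j) _ hmem hdom
  refine this.congr fun t => ?_
  rw [tauA_eq]
  congr 2
  ring

lemma my_div_helper (x e A B : ℂ) (he : e ≠ 0) : (x * e * A) / (e * B) = x * (A / B) := by
  by_cases hB : B = 0
  · simp [hB]
  · field_simp

/-- the exponentiated interaction-shift formula.  Under the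
sorting condition and with all `r_j ≠ 0`, the limits
`B⁺ = lim_{t→+∞} exp(2ζ_k t) A_k/A_{k-1}` and
`B⁻ = lim_{t→-∞} exp(2ζ_k t) A_{k̄}/A_{k̄-1}` (with `k̄ = N+1-k`) exist, are
nonzero, and satisfy
`B⁻/B⁺ = ∏_{j>k}(2ζ_j-2ζ_k)² / ∏_{j<k}(2ζ_j-2ζ_k)²`.
Here `k : Fin N` is 0-based (the paper's `k - 1`), so the paper's `k̄` is the
0-based index `N-1-k`. -/
theorem stmt_10 (N : ℕ) (hN : 1 ≤ N) (ζ r : Fin N → ℂ)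
    (hsort : ∀ i j : Fin N, (i : ℕ) < (j : ℕ) → (ζ i).re < (ζ j).re)
    (hr : ∀ j : Fin N, r j ≠ 0) (k : Fin N) :
    letI kbar : Fin N := ⟨N - 1 - (k : ℕ), by have := k.isLt; omega⟩
    ∃ Bp Bm : ℂ,
      Filter.Tendsto
        (fun t : ℝ =>
          Complex.exp (2 * ζ k * t) * (tauA N ζ r ((k : ℕ) + 1) t / tauA N ζ r (k : ℕ) t))
        Filter.atTop (nhds Bp) ∧
      Filter.Tendsto
        (fun t : ℝ =>
          Complex.exp (2 * ζ k * t) *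
            (tauA N ζ r ((kbar : ℕ) + 1) t / tauA N ζ r (kbar : ℕ) t))
        Filter.atBot (nhds Bm) ∧
      Bp ≠ 0 ∧ Bm ≠ 0 ∧
      Bm / Bp =
        (∏ j ∈ Finset.univ.filter (fun j : Fin N => (k : ℕ) < (j : ℕ)),
          (2 * ζ j - 2 * ζ k) ^ 2) /
        (∏ j ∈ Finset.univ.filter (fun j : Fin N => (j : ℕ) < (k : ℕ)),
          (2 * ζ j - 2 * ζ k) ^ 2) := by

  have hkN := k.isLt
  have h0 : (k : ℕ) ≤ N := le_of_lt hkN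
  have h1 : (k : ℕ) + 1 ≤ N := hkN
  have h3 : N - 1 - (k : ℕ) ≤ N := by omega
  have h2 : N - 1 - (k : ℕ) + 1 ≤ N := by omega
  set B0 := botS N (k : ℕ) h0 with hB0def
  set B1 := botS N ((k : ℕ) + 1) h1 with hB1def
  set T0 := topS N (N - 1 - (k : ℕ)) h3 with hT0def
  set T1 := topS N (N - 1 - (k : ℕ) + 1) h2 with hT1def
  have hB1 : B1 = insert k B0 := by
    ext j
    simp only [hB1def, hB0def, mem_botS, Finset.mem_insert, Fin.ext_iff]
    omega
  have hkB0 : k ∉ B0 := by simp [hB0def, mem_botS]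
  have hT1 : T1 = insert k T0 := by
    ext j
    have := j.isLt
    simp only [hT1def, hT0def, mem_topS, Finset.mem_insert, Fin.ext_iff]
    omega
  have hkT0 : k ∉ T0 := by
    simp only [hT0def, mem_topS]
    omega
  set c0 := coefA N ζ r B0 with hc0def
  set c1 := coefA N ζ r B1 with hc1def
  set c2 := coefA N ζ r T0 with hc2def
  set c3 := coefA N ζ r T1 with hc3def
  have hc0 : c0 ≠ 0 := coefA_ne_zero ζ r hsort hr _
  have hc1 : c1 ≠ 0 := coefA_ne_zero ζ r hsort hr _
  have hc2 : c2 ≠ 0 := coefA_ne_zero ζ r hsort hr _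
  have hc3 : c3 ≠ 0 := coefA_ne_zero ζ r hsort hr _
  have hsumB : ∑ j ∈ B1, ζ j = ζ k + ∑ j ∈ B0, ζ j := by
    rw [hB1, Finset.sum_insert hkB0]
  have hsumT : ∑ j ∈ T1, ζ j = ζ k + ∑ j ∈ T0, ζ j := by
    rw [hT1, Finset.sum_insert hkT0]
  -- the limits
  have LB0 := tauA_lim_atTop ζ r hsort (k : ℕ) h0
  have LB1 := tauA_lim_atTop ζ r hsort ((k : ℕ) + 1) h1
  have LT0 := tauA_lim_atBot ζ r hsort (N - 1 - (k : ℕ)) h3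
  have LT1 := tauA_lim_atBot ζ r hsort (N - 1 - (k : ℕ) + 1) h2
  have hTp : Filter.Tendsto
      (fun t : ℝ =>
        Complex.exp (2 * ζ k * t) * (tauA N ζ r ((k : ℕ) + 1) t / tauA N ζ r (k : ℕ) t))
      Filter.atTop (nhds (c1 / c0)) := by
    refine (LB1.div LB0 hc0).congr fun t => ?_
    simp only [Pi.div_apply]
    rw [hsumB, show (2 * (ζ k + ∑ j ∈ B0, ζ j) : ℂ) * t
        = 2 * ζ k * t + (2 * ∑ j ∈ B0, ζ j) * t by ring, Complex.exp_add]
    exact my_div_helper _ _ _ _ (Complex.exp_ne_zero _)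
  have hTm : Filter.Tendsto
      (fun t : ℝ =>
        Complex.exp (2 * ζ k * t) *
          (tauA N ζ r (N - 1 - (k : ℕ) + 1) t / tauA N ζ r (N - 1 - (k : ℕ)) t))
      Filter.atBot (nhds (c3 / c2)) := by
    refine (LT1.div LT0 hc2).congr fun t => ?_
    simp only [Pi.div_apply]
    rw [hsumT, show (2 * (ζ k + ∑ j ∈ T0, ζ j) : ℂ) * t
        = 2 * ζ k * t + (2 * ∑ j ∈ T0, ζ j) * t by ring, Complex.exp_add]
    exact my_div_helper _ _ _ _ (Complex.exp_ne_zero _)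
  -- coefficient ratios
  have hrowB : (∏ q ∈ B0, if k < q then 2 * ζ q - 2 * ζ k else 1) = 1 := by
    refine Finset.prod_eq_one fun q hq => ?_
    rw [hB0def, mem_botS] at hq
    exact if_neg (by rw [Fin.lt_def]; omega)
  have hcolB : (∏ p ∈ B0, if p < k then 2 * ζ k - 2 * ζ p else 1)
      = ∏ p ∈ B0, (2 * ζ k - 2 * ζ p) := by
    refine Finset.prod_congr rfl fun p hp => ?_
    rw [hB0def, mem_botS] at hp
    exact if_pos (by rw [Fin.lt_def]; omega)
  have hrowT : (∏ q ∈ T0, if k < q then 2 * ζ q - 2 * ζ k else 1)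
      = ∏ q ∈ T0, (2 * ζ q - 2 * ζ k) := by
    refine Finset.prod_congr rfl fun q hq => ?_
    rw [hT0def, mem_topS] at hq
    exact if_pos (by rw [Fin.lt_def]; omega)
  have hcolT : (∏ p ∈ T0, if p < k then 2 * ζ k - 2 * ζ p else 1) = 1 := by
    refine Finset.prod_eq_one fun p hp => ?_
    rw [hT0def, mem_topS] at hp
    exact if_neg (by rw [Fin.lt_def]; omega)
  have hc1eq : c1 = c0 * ((r k) ^ 2 * (∏ p ∈ B0, (2 * ζ k - 2 * ζ p)) ^ 2) := by
    rw [hc1def, hc0def, hB1, coefA_insert ζ r k B0 hkB0, hrowB, hcolB, one_mul]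
  have hc3eq : c3 = c2 * ((r k) ^ 2 * (∏ q ∈ T0, (2 * ζ q - 2 * ζ k)) ^ 2) := by
    rw [hc3def, hc2def, hT1, coefA_insert ζ r k T0 hkT0, hrowT, hcolT, mul_one]
  -- the filter sets
  have hT0f : T0 = Finset.univ.filter (fun j : Fin N => (k : ℕ) < (j : ℕ)) := by
    ext j
    have := j.isLt
    simp only [hT0def, mem_topS, Finset.mem_filter, Finset.mem_univ, true_and]
    omega
  have hB0f : B0 = Finset.univ.filter (fun j : Fin N => (j : ℕ) < (k : ℕ)) := by
    ext j
    simp only [hB0def, mem_botS, Finset.mem_filter, Finset.mem_univ, true_and]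
  refine ⟨c1 / c0, c3 / c2, hTp, hTm, div_ne_zero hc1 hc0, div_ne_zero hc3 hc2, ?_⟩
  rw [show c3 / c2 / (c1 / c0) = (c3 / c2) / (c1 / c0) from rfl]
  rw [hc3eq, hc1eq, mul_div_cancel_left₀ _ hc2, mul_div_cancel_left₀ _ hc0,
    mul_div_mul_left _ _ (pow_ne_zero 2 (hr k)),
    ← Finset.prod_pow, ← Finset.prod_pow, hT0f, hB0f]
  congr 1
  exact Finset.prod_congr rfl fun p _ => by ring
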